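/- For all a, b > 0 and ν ∈ [0,1]: (1/2)·ν·(1−ν)·(b−a)²/max(a,b)² ≤ ln((1−ν)·a + ν·b) − (1−ν)·ln a − ν·ln b ≤ (1/2)·ν·(1−ν)·(b−a)²/min(a,b)². -/

import Mathlib

lemma aux1_mono : MonotoneOn (fun x : ℝ => Real.log (1+x) - x + x^2/2) (Set.Ioi (-1:ℝ)) := by
  have hconv : Convex ℝ (Set.Ioi (-1:ℝ)) := convex_Ioi _
  have hd : ∀ x ∈ Set.Ioi (-1:ℝ),
      HasDerivAt (fun x : ℝ => Real.log (1+x) - x + x^2/2) (1/(1+x) - 1 + x) x := by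
    intro x hx
    simp only [Set.mem_Ioi] at hx
    have h1 : (0:ℝ) < 1 + x := by linarith
    have : HasDerivAt (fun x : ℝ => 1 + x) 1 x := (hasDerivAt_id x).const_add 1
    have hl := this.log h1.ne'
    exact ((hl.sub (hasDerivAt_id x)).add ((hasDerivAt_pow 2 x).div_const 2)).congr_deriv (by push_cast; ring)
  apply monotoneOn_of_deriv_nonneg hconv
  · apply ContinuousOn.add
    · apply ContinuousOn.sub
      · apply ContinuousOn.log (by fun_prop)
        intro x hx
        simp only [Set.mem_Ioi] at hx
        linarith
      · fun_prop
    · fun_prop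
  · rw [interior_Ioi]
    exact fun x hx => (hd x hx).differentiableAt.differentiableWithinAt
  · rw [interior_Ioi]
    intro x hx
    have hx' : -1 < x := hx
    have h1 : (0:ℝ) < 1 + x := by linarith
    rw [(hd x hx).deriv]
    have : 1/(1+x) - 1 + x = x^2/(1+x) := by field_simp; ring
    rw [this]
    positivity

lemma aux2_deriv (x : ℝ) (hx : -1 < x) :
    HasDerivAt (fun x : ℝ => x - x^2/(2*(1+x)^2) - Real.log (1+x))
      (1 - (2*x*(2*(1+x)^2) - x^2*(2*(2*(1+x)))) / (2*(1+x)^2)^2 - 1/(1+x)) x := by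
  have h1 : (0:ℝ) < 1 + x := by linarith
  have hb : HasDerivAt (fun x : ℝ => 1 + x) 1 x := (hasDerivAt_id x).const_add 1
  have hden : HasDerivAt (fun x : ℝ => 2*(1+x)^2) (2*(2*(1+x))) x := by
    have := ((hb.pow 2).const_mul (2:ℝ))
    simpa [mul_comm, mul_assoc, mul_left_comm] using this
  have hnum : HasDerivAt (fun x : ℝ => x^2) (2*x) x := by
    simpa using hasDerivAt_pow 2 x
  have hdiv := hnum.div hden (by positivity)
  have hl := hb.log h1.ne'
  have := ((hasDerivAt_id x).sub hdiv).sub hl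
  exact this

lemma aux2_mono : MonotoneOn (fun x : ℝ => x - x^2/(2*(1+x)^2) - Real.log (1+x)) (Set.Ioi (-1:ℝ)) := by
  have hconv : Convex ℝ (Set.Ioi (-1:ℝ)) := convex_Ioi _
  apply monotoneOn_of_deriv_nonneg hconv
  · apply ContinuousOn.sub
    · apply ContinuousOn.sub (by fun_prop)
      apply ContinuousOn.div (by fun_prop) (by fun_prop)
      intro x hx
      simp only [Set.mem_Ioi] at hx
      have : (0:ℝ) < 1 + x := by linarith
      positivity
    · apply ContinuousOn.log (by fun_prop)
      intro x hx
      simp only [Set.mem_Ioi] at hx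
      linarith
  · rw [interior_Ioi]
    exact fun x hx => (aux2_deriv x hx).differentiableAt.differentiableWithinAt
  · rw [interior_Ioi]
    intro x hx
    simp only [Set.mem_Ioi] at hx
    have h1 : (0:ℝ) < 1 + x := by linarith
    rw [(aux2_deriv x hx).deriv]
    have key : 1 - (2*x*(2*(1+x)^2) - x^2*(2*(2*(1+x)))) / (2*(1+x)^2)^2 - 1/(1+x)
        = x^2*(x+2)/(1+x)^3 := by
      field_simp
      ring
    rw [key]
    have : (0:ℝ) < x + 2 := by linarith
    positivity

lemma log_ge_quad (x : ℝ) (hx : 0 ≤ x) : x - x^2/2 ≤ Real.log (1+x) := by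
  have := aux1_mono (by norm_num : (0:ℝ) ∈ Set.Ioi (-1:ℝ))
    (by simp only [Set.mem_Ioi]; linarith : x ∈ Set.Ioi (-1:ℝ)) hx
  simp only [Real.log_one, add_zero] at this
  nlinarith [this]

lemma log_le_quad (x : ℝ) (h1 : -1 < x) (hx : x ≤ 0) : Real.log (1+x) ≤ x - x^2/2 := by
  have := aux1_mono (by simpa using h1 : x ∈ Set.Ioi (-1:ℝ))
    (by norm_num : (0:ℝ) ∈ Set.Ioi (-1:ℝ)) hx
  simp only [Real.log_one, add_zero] at this
  nlinarith [this]

lemma log_le_L (x : ℝ) (hx : 0 ≤ x) : Real.log (1+x) ≤ x - x^2/(2*(1+x)^2) := by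
  have := aux2_mono (by norm_num : (0:ℝ) ∈ Set.Ioi (-1:ℝ))
    (by simp only [Set.mem_Ioi]; linarith : x ∈ Set.Ioi (-1:ℝ)) hx
  simp only [Real.log_one, add_zero] at this
  nlinarith [this]

lemma log_ge_L (x : ℝ) (h1 : -1 < x) (hx : x ≤ 0) : x - x^2/(2*(1+x)^2) ≤ Real.log (1+x) := by
  have := aux2_mono (by simpa using h1 : x ∈ Set.Ioi (-1:ℝ))
    (by norm_num : (0:ℝ) ∈ Set.Ioi (-1:ℝ)) hx
  simp only [Real.log_one, add_zero] at this
  nlinarith [this]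

lemma helper (a b ν μ : ℝ) (ha : 0 < a) (hab : a ≤ b) (hν : 0 ≤ ν) (hμ : 0 ≤ μ)
    (hs : ν + μ = 1) :
    1/2 * ν * μ * (b-a)^2 / b^2 ≤ Real.log (μ*a + ν*b) - μ*Real.log a - ν*Real.log b ∧
    Real.log (μ*a + ν*b) - μ*Real.log a - ν*Real.log b ≤ 1/2 * ν * μ * (b-a)^2 / a^2 := by
  have hμν : μ = 1 - ν := by linarith
  subst hμν
  have hν1 : ν ≤ 1 := by linarith
  have hb : 0 < b := lt_of_lt_of_le ha hab
  have hM : 0 < (1-ν)*a + ν*b := by nlinarith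
  set M := (1-ν)*a + ν*b with hMdef
  have haM : a ≤ M := by rw [hMdef]; nlinarith
  have hMb : M ≤ b := by rw [hMdef]; nlinarith
  have hpgt : -1 < a/M - 1 := by
    have : 0 < a/M := by positivity
    linarith
  have hple : a/M - 1 ≤ 0 := by
    have := (div_le_one hM).mpr haM; linarith
  have hqge : 0 ≤ b/M - 1 := by
    have := (one_le_div hM).mpr hMb; linarith
  have e1 : (1:ℝ) + (a/M - 1) = a/M := by ring
  have e2 : (1:ℝ) + (b/M - 1) = b/M := by ring
  have la : Real.log (a/M) = Real.log a - Real.log M := Real.log_div ha.ne' hM.ne'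
  have lb : Real.log (b/M) = Real.log b - Real.log M := Real.log_div hb.ne' hM.ne'
  have hA := log_ge_L _ hpgt hple
  rw [e1, la] at hA
  have hB := log_ge_quad _ hqge
  rw [e2, lb] at hB
  have hA' := log_le_quad _ hpgt hple
  rw [e1, la] at hA'
  have hB' := log_le_L _ hqge
  rw [e2, lb] at hB'
  have hν' : 0 ≤ 1 - ν := by linarith
  constructor
  · -- lower bound, uses hA' (log(a/M) ≤ Q) and hB' (log(b/M) ≤ L)
    have mA := mul_le_mul_of_nonneg_left hA' hν'
    have mB := mul_le_mul_of_nonneg_left hB' hν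
    have key : -((1-ν)*(a/M - 1 - (a/M - 1)^2/2) + ν*(b/M - 1 - (b/M - 1)^2/(2*(b/M)^2)))
        = (1-ν)*ν^2*(b-a)^2/(2*M^2) + ν*(1-ν)^2*(b-a)^2/(2*b^2) := by
      have hM' : (1-ν)*a + ν*b ≠ 0 := hM.ne'
      rw [hMdef]
      field_simp
      ring
    have h2 : (1-ν)*ν^2*(b-a)^2/(2*b^2) ≤ (1-ν)*ν^2*(b-a)^2/(2*M^2) := by
      gcongr
    have e : (1-ν)*ν^2*(b-a)^2/(2*b^2) + ν*(1-ν)^2*(b-a)^2/(2*b^2)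
        = 1/2 * ν * (1-ν) * (b-a)^2 / b^2 := by ring
    linarith
  · -- upper bound, uses hA (log(a/M) ≥ L) and hB (log(b/M) ≥ Q)
    have mA := mul_le_mul_of_nonneg_left hA hν'
    have mB := mul_le_mul_of_nonneg_left hB hν
    have key : -((1-ν)*(a/M - 1 - (a/M - 1)^2/(2*(a/M)^2)) + ν*(b/M - 1 - (b/M - 1)^2/2))
        = (1-ν)*ν^2*(b-a)^2/(2*a^2) + ν*(1-ν)^2*(b-a)^2/(2*M^2) := by
      have hM' : (1-ν)*a + ν*b ≠ 0 := hM.ne'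
      rw [hMdef]
      field_simp
      ring
    have h2 : ν*(1-ν)^2*(b-a)^2/(2*M^2) ≤ ν*(1-ν)^2*(b-a)^2/(2*a^2) := by
      gcongr
    have e : (1-ν)*ν^2*(b-a)^2/(2*a^2) + ν*(1-ν)^2*(b-a)^2/(2*a^2)
        = 1/2 * ν * (1-ν) * (b-a)^2 / a^2 := by ring
    linarith

theorem stmt_4 (a b : ℝ) (ha : 0 < a) (hb : 0 < b) (ν : ℝ) (hν : ν ∈ Set.Icc (0:ℝ) 1) :
    1/2 * ν * (1 - ν) * (b - a)^2 / (max a b)^2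
      ≤ Real.log ((1 - ν) * a + ν * b) - (1 - ν) * Real.log a - ν * Real.log b ∧
    Real.log ((1 - ν) * a + ν * b) - (1 - ν) * Real.log a - ν * Real.log b
      ≤ 1/2 * ν * (1 - ν) * (b - a)^2 / (min a b)^2 := by
  obtain ⟨hν0, hν1⟩ := hν
  rcases le_total a b with hab | hab
  · rw [max_eq_right hab, min_eq_left hab]
    exact helper a b ν (1-ν) ha hab hν0 (by linarith) (by ring)
  · rw [max_eq_left hab, min_eq_right hab]
    obtain ⟨h1, h2⟩ := helper b a (1-ν) ν hb hab (by linarith) hν0 (by ring)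
    have earg : ν * b + (1-ν) * a = (1 - ν) * a + ν * b := by ring
    rw [earg] at h1 h2
    have e1 : 1/2 * (1-ν) * ν * (a-b)^2 / a^2 = 1/2 * ν * (1 - ν) * (b - a)^2 / a^2 := by ring
    have e2 : 1/2 * (1-ν) * ν * (a-b)^2 / b^2 = 1/2 * ν * (1 - ν) * (b - a)^2 / b^2 := by ring
    constructor <;> linarith
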